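/- A partition λ has equal numbers of boxes in each content residue class mod M (i.e., #{(i,j) ∈ λ : j - i ≡ r (mod M)} is independent of r) if and only if λ is M-core-free, i.e., the M-core of λ is the empty partition. -/

import Mathlib

open Finset PowerSeries

/-- The hook length of a cell `c` of a Young diagram. -/
def hookLen (Y : YoungDiagram) (c : ℕ × ℕ) : ℕ :=
  (Y.rowLen c.1 - c.2) + (Y.colLen c.2 - c.1) - 1

/-- The Maya diagram (set of beta-numbers) of a Young diagram:
`{rowLen i - i - 1 : i ∈ ℕ} ⊆ ℤ`. -/
def mayaOf (Y : YoungDiagram) : Set ℤ :=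
  Set.range fun i : ℕ => (Y.rowLen i : ℤ) - i - 1

/-- The number of elements of `T` lying strictly above `t`. -/
noncomputable def countAbove (T : Set ℤ) (t : ℤ) : ℕ :=
  {u : ℤ | u ∈ T ∧ t < u}.ncard

/-- The `i`-th part (0-indexed) of the partition associated to a Maya diagram `T`. -/
noncomputable def mayaPart (T : Set ℤ) (i : ℕ) : ℕ :=
  {t : ℤ | t ∉ T ∧ i + 1 ≤ countAbove T t}.ncard

/-- The `j`-th runner of the Maya diagram of `Y` on an `M`-runner abacus. -/
def runner (M : ℕ) (Y : YoungDiagram) (j : ℕ) : Set ℤ :=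
  {q : ℤ | (M : ℤ) * q + (j : ℤ) ∈ mayaOf Y}

/-- The parts of the `j`-th partition in the `M`-quotient of `Y`. -/
noncomputable def quotientPart (M : ℕ) (Y : YoungDiagram) (j : ℕ) : ℕ → ℕ :=
  mayaPart (runner M Y j)

/-- The size of the `j`-th partition of the `M`-quotient of `Y`. -/
noncomputable def quotientSize (M : ℕ) (Y : YoungDiagram) (j : ℕ) : ℕ :=
  {c : ℕ × ℕ | c.2 < quotientPart M Y j c.1}.ncard

/-- The charge of a Maya diagram. -/
noncomputable def charge (T : Set ℤ) : ℤ :=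
  ({t : ℤ | t ∈ T ∧ 0 ≤ t}.ncard : ℤ) - ({t : ℤ | t ∉ T ∧ t < 0}.ncard : ℤ)

/-- The Maya diagram of the `M`-core of `Y`: push all beads down on each runner. -/
def coreMaya (M : ℕ) (Y : YoungDiagram) : Set ℤ :=
  {z : ℤ | Int.ediv z M < charge (runner M Y (Int.emod z M).toNat)}

/-- The parts of the `M`-core of `Y`. -/
noncomputable def corePart (M : ℕ) (Y : YoungDiagram) : ℕ → ℕ :=
  mayaPart (coreMaya M Y)

def bet (Y : YoungDiagram) (i : ℕ) : ℤ := (Y.rowLen i : ℤ) - i - 1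

lemma bet_strictAnti (Y : YoungDiagram) : StrictAnti (bet Y) := by
  intro i k h
  have := Y.rowLen_anti i k h.le
  simp only [bet]
  have : (Y.rowLen k : ℤ) ≤ Y.rowLen i := by exact_mod_cast this
  have hik : (i:ℤ) < k := by exact_mod_cast h
  omega

lemma rowLen_eq_zero_of_le (Y : YoungDiagram) {i : ℕ} (h : Y.colLen 0 ≤ i) :
    Y.rowLen i = 0 := by
  by_contra hne
  have h1 : (i, 0) ∈ Y := YoungDiagram.mem_iff_lt_rowLen.2 (Nat.pos_of_ne_zero hne)
  have := YoungDiagram.mem_iff_lt_colLen.1 h1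
  omega

lemma bet_of_le (Y : YoungDiagram) {i : ℕ} (h : Y.colLen 0 ≤ i) :
    bet Y i = -(i:ℤ) - 1 := by
  simp [bet, rowLen_eq_zero_of_le Y h]

lemma mem_maya_iff {Y : YoungDiagram} {t : ℤ} : t ∈ mayaOf Y ↔ ∃ i, bet Y i = t :=
  Iff.rfl

lemma maya_of_le {Y : YoungDiagram} {t : ℤ} (h : t ≤ -(Y.colLen 0 : ℤ) - 1) :
    t ∈ mayaOf Y := by
  refine mem_maya_iff.2 ⟨(-t-1).toNat, ?_⟩
  have hn : (Y.colLen 0 : ℤ) ≤ ((-t-1).toNat : ℤ) := by omega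
  rw [bet_of_le Y (by exact_mod_cast hn)]
  omega

lemma bet_lower {Y : YoungDiagram} {i : ℕ} (h : i < Y.colLen 0) :
    -(Y.colLen 0 : ℤ) ≤ bet Y i := by
  simp only [bet]; omega

lemma mem_maya_small {Y : YoungDiagram} {t : ℤ} (ht : t ∈ mayaOf Y)
    (h : -(Y.colLen 0 : ℤ) ≤ t) : ∃ i < Y.colLen 0, bet Y i = t := by
  obtain ⟨i, hi⟩ := mem_maya_iff.1 ht
  refine ⟨i, ?_, hi⟩
  by_contra hlt
  push_neg at hlt
  rw [bet_of_le Y hlt] at hi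
  have : (Y.colLen 0 : ℤ) ≤ i := by exact_mod_cast hlt
  omega

lemma ediv_sub_one {M : ℤ} (hM : 0 < M) (z : ℤ) :
    z / M - (z - 1) / M = if M ∣ z then 1 else 0 := by
  by_cases h : M ∣ z
  · obtain ⟨q, rfl⟩ := h
    rw [if_pos ⟨q, rfl⟩, Int.mul_ediv_cancel_left _ hM.ne']
    have h5 : M * q - 1 = (M - 1) + M * (q - 1) := by ring
    rw [h5, Int.add_mul_ediv_left _ _ hM.ne', Int.ediv_eq_zero_of_lt (by omega) (by omega)]
    ring
  · rw [if_neg h]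
    have h1 : z % M ≠ 0 := fun hh => h (Int.dvd_of_emod_eq_zero hh)
    have h2 : 0 ≤ z % M := Int.emod_nonneg z hM.ne'
    have h3 : z % M < M := Int.emod_lt_of_pos z hM
    have h4 : M * (z / M) + z % M = z := Int.mul_ediv_add_emod z M
    set q := z / M with hq
    set r := z % M with hrdef
    have h5 : z - 1 = (r - 1) + M * q := by omega
    rw [h5, Int.add_mul_ediv_left _ _ hM.ne']
    have h7 : (r - 1) / M = 0 := Int.ediv_eq_zero_of_lt (by omega) (by omega)
    omega

lemma count_range {M : ℤ} (hM : 0 < M) (a : ℤ) (L : ℕ) :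
    (((Finset.range L).filter (fun (x : ℕ) => M ∣ ((x:ℤ) - a))).card : ℤ)
      = ((L:ℤ) - 1 - a) / M - (-1 - a) / M := by
  induction L with
  | zero => simp
  | succ L ih =>
    rw [Finset.range_add_one, Finset.filter_insert]
    have key := ediv_sub_one hM ((L:ℤ) - a)
    have harg : ((L:ℤ) - a) - 1 = (L:ℤ) - 1 - a := by ring
    have harg2 : ((L+1:ℕ):ℤ) - 1 - a = (L:ℤ) - a := by push_cast; ring
    by_cases h : M ∣ ((L:ℤ) - a)
    · rw [if_pos h, Finset.card_insert_of_notMem (by simp)]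
      rw [if_pos h, harg] at key
      rw [harg2]
      push_cast
      omega
    · rw [if_neg h, ih]
      rw [if_neg h, harg] at key
      rw [harg2]
      omega
lemma cells_filter_card (Y : YoungDiagram) (P : ℕ × ℕ → Prop) [DecidablePred P] :
    (Y.cells.filter P).card
      = ∑ i ∈ Finset.range (Y.colLen 0),
          ((Finset.range (Y.rowLen i)).filter (fun j => P (i, j))).card := by
  have hcells : Y.cells = (Finset.range (Y.colLen 0)).biUnion (fun i => Y.row i) := by
    ext ⟨i, j⟩
    simp only [Finset.mem_biUnion, Finset.mem_range, YoungDiagram.mem_row_iff]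
    constructor
    · intro h
      refine ⟨i, ?_, (YoungDiagram.mem_cells _).1 h, rfl⟩
      have h1 : (i, 0) ∈ Y := Y.up_left_mem le_rfl (Nat.zero_le j) ((YoungDiagram.mem_cells _).1 h)
      exact YoungDiagram.mem_iff_lt_colLen.1 h1
    · rintro ⟨i', _, h, rfl⟩
      exact (YoungDiagram.mem_cells _).2 h
  rw [hcells, Finset.filter_biUnion, Finset.card_biUnion]
  · refine Finset.sum_congr rfl fun i _ => ?_
    rw [YoungDiagram.row_eq_prod, Finset.singleton_product, Finset.filter_map,
      Finset.card_map]
    rfl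
  · intro i _ k _ hik
    simp only [Finset.disjoint_left]
    rintro ⟨a, b⟩ ha hb
    simp only [Finset.mem_filter, YoungDiagram.mem_row_iff] at ha hb
    exact hik (ha.1.2 ▸ hb.1.2 ▸ rfl)
lemma zmod_cond_iff (M : ℕ) (hM : 0 < M) (a : ℤ) (c : ℕ × ℕ) :
    (((c.2 : ZMod M) - (c.1 : ZMod M)) = (a : ZMod M)) ↔ (M:ℤ) ∣ ((c.2:ℤ) - ((c.1:ℤ) + a)) := by
  rw [← ZMod.intCast_zmod_eq_zero_iff_dvd, ← sub_eq_zero (a := ((c.2 : ZMod M) - (c.1 : ZMod M)))]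
  constructor <;> intro h <;> [skip; skip] <;>
  · rw [← h]; push_cast; ring

lemma LA (M : ℕ) (hM : 0 < M) (Y : YoungDiagram) (a : ℤ) :
    ((Y.cells.filter fun c => ((c.2 : ZMod M) - (c.1 : ZMod M)) = (a : ZMod M)).card : ℤ)
      = ∑ i ∈ Finset.range (Y.colLen 0),
          (((Y.rowLen i : ℤ) - 1 - ((i:ℤ) + a)) / M - (-1 - ((i:ℤ) + a)) / M) := by
  have h1 : (Y.cells.filter fun c => ((c.2 : ZMod M) - (c.1 : ZMod M)) = (a : ZMod M))
      = Y.cells.filter (fun c => (M:ℤ) ∣ ((c.2:ℤ) - ((c.1:ℤ) + a))) := by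
    apply Finset.filter_congr
    intro c _
    simp only [zmod_cond_iff M hM a c]
  rw [h1, cells_filter_card Y (fun c => (M:ℤ) ∣ ((c.2:ℤ) - ((c.1:ℤ) + a)))]
  push_cast
  refine Finset.sum_congr rfl fun i _ => ?_
  have := count_range (M := (M:ℤ)) (by exact_mod_cast hM) ((i:ℤ) + a) (Y.rowLen i)
  simpa using this
lemma ediv_mul_add {M q j : ℤ} (hM : 0 < M) (h0 : 0 ≤ j) (hjM : j < M) :
    (M * q + j) / M = q ∧ (M * q + j) % M = j := by
  have h1 : M * q + j = j + M * q := by ring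
  constructor
  · rw [h1, Int.add_mul_ediv_left _ _ hM.ne', Int.ediv_eq_zero_of_lt h0 hjM]; ring
  · rw [h1, Int.add_mul_emod_self_left, Int.emod_eq_of_lt h0 hjM]

lemma emod_reconstruct {M z j : ℤ} (h : z % M = j) : M * (z / M) + j = z := by
  rw [← h]; exact Int.mul_ediv_add_emod z M

lemma bet_neg_of_le {Y : YoungDiagram} {i : ℕ} (h : 0 ≤ bet Y i) : i < Y.colLen 0 := by
  by_contra hc
  push_neg at hc
  rw [bet_of_le Y hc] at h
  omega

lemma charge_runner_eq (M : ℕ) (hM : 0 < M) (Y : YoungDiagram) (a : ℤ) :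
    charge (runner M Y ((a % (M:ℤ)).toNat)) =
      ∑ i ∈ Finset.range (Y.colLen 0),
        ((if (M:ℤ) ∣ (bet Y i - a) then (1:ℤ) else 0)
          - (if (M:ℤ) ∣ (-(i:ℤ) - 1 - a) then 1 else 0)) := by
  classical
  set n := Y.colLen 0 with hn
  have hM' : (0:ℤ) < M := by exact_mod_cast hM
  set j : ℕ := ((a % (M:ℤ)).toNat) with hjdef
  have hj0 : 0 ≤ a % (M:ℤ) := Int.emod_nonneg a hM'.ne'
  have hjc : (j:ℤ) = a % M := Int.toNat_of_nonneg hj0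
  have hjM : (j:ℤ) < M := by rw [hjc]; exact Int.emod_lt_of_pos a hM'
  have hjnn : (0:ℤ) ≤ (j:ℤ) := Int.natCast_nonneg j
  have hdvd : ∀ z : ℤ, ((M:ℤ) ∣ z - a ↔ z % M = (j:ℤ)) := by
    intro z
    rw [Int.dvd_iff_emod_eq_zero, hjc, eq_comm, Int.emod_eq_emod_iff_emod_sub_eq_zero]
    exact eq_comm
  -- the four finsets
  set F1 : Finset ℕ := (Finset.range n).filter (fun i => (M:ℤ) ∣ bet Y i - a) with hF1
  set G : Finset ℕ := (Finset.range n).filter (fun i => (M:ℤ) ∣ (-(i:ℤ) - 1 - a)) with hG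
  set Fpos : Finset ℕ := F1.filter (fun i => 0 ≤ bet Y i) with hFpos
  set Fneg : Finset ℕ := F1.filter (fun i => ¬ 0 ≤ bet Y i) with hFneg
  set Gin : Finset ℕ := G.filter (fun i => (-(i:ℤ) - 1) ∈ mayaOf Y) with hGin
  set Gout : Finset ℕ := G.filter (fun i => ¬ (-(i:ℤ) - 1) ∈ mayaOf Y) with hGout
  have hsplitF : Fpos.card + Fneg.card = F1.card :=
    Finset.card_filter_add_card_filter_not _
  have hsplitG : Gin.card + Gout.card = G.card :=
    Finset.card_filter_add_card_filter_not _
  -- Fneg ≃ Gin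
  have hFG : Fneg.card = Gin.card := by
    apply Finset.card_bij (fun i _ => (-(bet Y i) - 1).toNat)
    · intro i hi
      simp only [hFneg, hF1, Finset.mem_filter, Finset.mem_range] at hi
      obtain ⟨⟨hin, hdv⟩, hbneg⟩ := hi
      push_neg at hbneg
      have hlow : -(n:ℤ) ≤ bet Y i := bet_lower hin
      have hcast : ((-(bet Y i) - 1).toNat : ℤ) = -(bet Y i) - 1 := by omega
      simp only [hGin, hG, Finset.mem_filter, Finset.mem_range]
      refine ⟨⟨?_, ?_⟩, ?_⟩
      · omega
      · rw [hcast]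
        convert hdv using 2
        omega
      · rw [hcast]
        have : -(-(bet Y i) - 1) - 1 = bet Y i := by ring
        rw [this]
        exact ⟨i, rfl⟩
    · intro i1 h1 i2 h2 heq
      simp only [hFneg, hF1, Finset.mem_filter, Finset.mem_range] at h1 h2
      have e1 : ((-(bet Y i1) - 1).toNat : ℤ) = -(bet Y i1) - 1 := by
        have := h1.2; omega
      have e2 : ((-(bet Y i2) - 1).toNat : ℤ) = -(bet Y i2) - 1 := by
        have := h2.2; omega
      have : bet Y i1 = bet Y i2 := by
        have := congrArg (fun x : ℕ => (x:ℤ)) heq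
        try simp only at this
        omega
      exact (bet_strictAnti Y).injective this
    · intro i' hi'
      simp only [hGin, hG, Finset.mem_filter, Finset.mem_range] at hi'
      obtain ⟨⟨hin, hdv⟩, hmem⟩ := hi'
      have hge : -(n:ℤ) ≤ -(i':ℤ) - 1 + 1 - 1 := by
        have : (i':ℤ) < n := by exact_mod_cast hin
        omega
      obtain ⟨i, hilt, hbi⟩ := mem_maya_small hmem (by
        have : (i':ℤ) < n := by exact_mod_cast hin
        omega)
      refine ⟨i, ?_, ?_⟩
      · simp only [hFneg, hF1, Finset.mem_filter, Finset.mem_range]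
        refine ⟨⟨hilt, ?_⟩, by omega⟩
        rw [hbi]; exact hdv
      · rw [hbi]
        omega
  -- charge = card Fpos - card Gout
  have hS1 : {q : ℤ | q ∈ runner M Y j ∧ 0 ≤ q}
      = ↑(Fpos.image (fun i => bet Y i / M)) := by
    ext q
    simp only [Set.mem_setOf_eq, Finset.coe_image, Set.mem_image, Finset.mem_coe,
      hFpos, hF1, Finset.mem_filter, Finset.mem_range]
    constructor
    · rintro ⟨hq, hq0⟩
      obtain ⟨i, hbi⟩ := mem_maya_iff.1 hq
      have hbi' : bet Y i = M * q + j := hbi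
      have hpos : 0 ≤ bet Y i := by rw [hbi']; positivity
      refine ⟨i, ⟨⟨bet_neg_of_le hpos, ?_⟩, hpos⟩, ?_⟩
      · rw [hdvd, hbi', (ediv_mul_add hM' hjnn hjM).2]
      · rw [hbi', (ediv_mul_add hM' hjnn hjM).1]
    · rintro ⟨i, ⟨⟨hin, hdv⟩, hpos⟩, rfl⟩
      have hmod : bet Y i % M = j := (hdvd _).1 hdv
      have hrec : M * (bet Y i / M) + j = bet Y i := emod_reconstruct hmod
      constructor
      · show (M:ℤ) * _ + _ ∈ mayaOf Y
        rw [hrec]; exact ⟨i, rfl⟩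
      · exact Int.ediv_nonneg hpos hM'.le
  have hS2 : {q : ℤ | q ∉ runner M Y j ∧ q < 0}
      = ↑(Gout.image (fun i : ℕ => (-(i:ℤ) - 1) / M)) := by
    ext q
    constructor
    · rintro ⟨hq, hq0⟩
      have hq' : ((M:ℤ) * q + j) ∉ mayaOf Y := hq
      have htn : -(n:ℤ) ≤ M * q + j := by
        by_contra hc
        push_neg at hc
        exact hq' (maya_of_le (by omega))
      have htneg : M * q + j < 0 := by nlinarith
      set t := (M:ℤ) * q + j with ht
      have hcast : (((-t - 1).toNat : ℤ)) = -t - 1 := by omega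
      have hmem : (-t - 1).toNat ∈ Gout := by
        rw [hGout, hG]
        simp only [Finset.mem_filter, Finset.mem_range]
        refine ⟨⟨?_, ?_⟩, ?_⟩
        · have : ((-t - 1).toNat : ℤ) < n := by omega
          exact_mod_cast this
        · rw [hcast]
          have h2 : -(-t - 1) - 1 - a = t - a := by ring
          rw [h2, hdvd, ht, (ediv_mul_add hM' hjnn hjM).2]
        · rw [hcast]
          have h2 : -(-t - 1) - 1 = t := by ring
          rw [h2]; exact hq'
      refine Finset.mem_coe.2 (Finset.mem_image.2 ⟨(-t - 1).toNat, hmem, ?_⟩)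
      rw [hcast]
      have h2 : -(-t - 1) - 1 = t := by ring
      rw [h2, ht, (ediv_mul_add hM' hjnn hjM).1]
    · intro hq
      obtain ⟨i, hi, rfl⟩ := Finset.mem_image.1 (Finset.mem_coe.1 hq)
      rw [hGout, hG] at hi
      simp only [Finset.mem_filter, Finset.mem_range] at hi
      obtain ⟨⟨hin, hdv⟩, hnm⟩ := hi
      have hmod : (-(i:ℤ) - 1) % M = j := (hdvd _).1 hdv
      have hrec : M * ((-(i:ℤ) - 1) / M) + j = -(i:ℤ) - 1 := emod_reconstruct hmod
      constructor
      · show ¬ ((M:ℤ) * _ + _ ∈ mayaOf Y)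
        rw [hrec]; exact hnm
      · by_contra hc
        push_neg at hc
        have : 0 ≤ (M:ℤ) * ((-(i:ℤ) - 1) / M) := by positivity
        have hnn : (0:ℤ) ≤ (i:ℤ) := Int.natCast_nonneg i
        omega
  have hinj1 : Set.InjOn (fun i => bet Y i / M) ↑Fpos := by
    intro i1 h1 i2 h2 heq
    simp only [Finset.coe_filter, hFpos, hF1, Finset.mem_filter, Finset.mem_range,
      Set.mem_setOf_eq, Finset.mem_coe] at h1 h2
    have hm1 : bet Y i1 % M = j := (hdvd _).1 (by tauto)
    have hm2 : bet Y i2 % M = j := (hdvd _).1 (by tauto)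
    have : bet Y i1 = bet Y i2 := by
      rw [← emod_reconstruct hm1, ← emod_reconstruct hm2]
      simp only at heq
      rw [heq]
    exact (bet_strictAnti Y).injective this
  have hinj2 : Set.InjOn (fun i : ℕ => (-(i:ℤ) - 1) / M) ↑Gout := by
    intro i1 h1 i2 h2 heq
    simp only [Finset.coe_filter, hGout, hG, Finset.mem_filter, Finset.mem_range,
      Set.mem_setOf_eq, Finset.mem_coe] at h1 h2
    have hm1 : (-(i1:ℤ) - 1) % M = j := (hdvd _).1 (by tauto)
    have hm2 : (-(i2:ℤ) - 1) % M = j := (hdvd _).1 (by tauto)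
    have : -(i1:ℤ) - 1 = -(i2:ℤ) - 1 := by
      rw [← emod_reconstruct hm1, ← emod_reconstruct hm2]
      simp only at heq
      rw [heq]
    have : (i1:ℤ) = i2 := by omega
    exact_mod_cast this
  have hch : charge (runner M Y j) = (Fpos.card : ℤ) - Gout.card := by
    unfold charge
    rw [hS1, hS2, Set.ncard_coe_finset, Set.ncard_coe_finset,
      Finset.card_image_of_injOn hinj1, Finset.card_image_of_injOn hinj2]
  -- sum computation
  rw [Finset.sum_sub_distrib, Finset.sum_boole, Finset.sum_boole, hch]
  have : (F1.card : ℤ) - G.card = (Fpos.card : ℤ) - Gout.card := by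
    omega
  rw [← hF1, ← hG]
  exact this.symm
lemma key_identity (M : ℕ) (hM : 0 < M) (Y : YoungDiagram) (a : ℤ) :
    ((Y.cells.filter fun c => ((c.2 : ZMod M) - (c.1 : ZMod M)) = (a : ZMod M)).card : ℤ)
      - ((Y.cells.filter fun c => ((c.2 : ZMod M) - (c.1 : ZMod M)) = ((a + 1 : ℤ) : ZMod M)).card : ℤ)
      = charge (runner M Y ((a % (M:ℤ)).toNat)) := by
  have hM' : (0:ℤ) < M := by exact_mod_cast hM
  rw [LA M hM Y a, LA M hM Y (a+1), charge_runner_eq M hM Y a, ← Finset.sum_sub_distrib]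
  refine Finset.sum_congr rfl fun i _ => ?_
  have k1 := ediv_sub_one hM' (bet Y i - a)
  have k2 := ediv_sub_one hM' (-(i:ℤ) - 1 - a)
  have e1 : (Y.rowLen i:ℤ) - 1 - ((i:ℤ) + a) = bet Y i - a := by simp only [bet]; ring
  have e2 : (Y.rowLen i:ℤ) - 1 - ((i:ℤ) + (a + 1)) = bet Y i - a - 1 := by
    simp only [bet]; ring
  have e3 : (-1 : ℤ) - ((i:ℤ) + a) = -(i:ℤ) - 1 - a := by ring
  have e4 : (-1 : ℤ) - ((i:ℤ) + (a + 1)) = (-(i:ℤ) - 1 - a) - 1 := by ring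
  rw [e1, e2, e3, e4]
  by_cases h1 : (M:ℤ) ∣ bet Y i - a <;> by_cases h2 : (M:ℤ) ∣ (-(i:ℤ) - 1 - a) <;>
    simp only [h1, h2, if_pos, if_neg, if_true, if_false, not_false_iff] at k1 k2 ⊢ <;>
    omega

lemma indicator_sum {M : ℤ} (hM : 0 < M) (z : ℤ) :
    ∑ b ∈ Finset.range M.toNat, (if M ∣ z - (b:ℤ) then (1:ℤ) else 0) = 1 := by
  classical
  rw [Finset.sum_boole]
  have h : (Finset.range M.toNat).filter (fun b : ℕ => M ∣ z - (b:ℤ)) = {(z % M).toNat} := by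
    ext b
    simp only [Finset.mem_filter, Finset.mem_range, Finset.mem_singleton]
    have hz0 : 0 ≤ z % M := Int.emod_nonneg z hM.ne'
    have hzM : z % M < M := Int.emod_lt_of_pos z hM
    constructor
    · rintro ⟨hb, hdv⟩
      have hb' : (b:ℤ) < M := by
        have : (b:ℤ) < (M.toNat:ℤ) := by exact_mod_cast hb
        omega
      have : z % M = (b:ℤ) % M := by
        rw [Int.emod_eq_emod_iff_emod_sub_eq_zero]
        exact Int.emod_eq_zero_of_dvd hdv
      rw [Int.emod_eq_of_lt (Int.natCast_nonneg b) hb'] at this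
      omega
    · rintro rfl
      have hc : (((z % M).toNat : ℤ)) = z % M := Int.toNat_of_nonneg hz0
      constructor
      · have : ((z % M).toNat : ℤ) < (M.toNat : ℤ) := by omega
        exact_mod_cast this
      · rw [hc]
        have := Int.mul_ediv_add_emod z M
        exact ⟨z / M, by omega⟩
  rw [h]
  simp

lemma sum_charge (M : ℕ) (hM : 0 < M) (Y : YoungDiagram) :
    ∑ b ∈ Finset.range M, charge (runner M Y b) = 0 := by
  have hM' : (0:ℤ) < M := by exact_mod_cast hM
  have step : ∀ b ∈ Finset.range M, charge (runner M Y b)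
      = ∑ i ∈ Finset.range (Y.colLen 0),
          ((if (M:ℤ) ∣ (bet Y i - (b:ℤ)) then (1:ℤ) else 0)
            - (if (M:ℤ) ∣ (-(i:ℤ) - 1 - (b:ℤ)) then 1 else 0)) := by
    intro b hb
    have hb' : (b:ℤ) < M := by exact_mod_cast Finset.mem_range.1 hb
    have : (((b:ℤ) % (M:ℤ)).toNat) = b := by
      rw [Int.emod_eq_of_lt (Int.natCast_nonneg b) hb']
      simp
    have h2 := charge_runner_eq M hM Y (b:ℤ)
    rw [this] at h2
    exact h2
  rw [Finset.sum_congr rfl step, Finset.sum_comm]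
  have hMt : (M:ℤ).toNat = M := by simp
  refine Finset.sum_eq_zero fun i _ => ?_
  rw [Finset.sum_sub_distrib]
  have i1 := indicator_sum hM' (bet Y i)
  have i2 := indicator_sum hM' (-(i:ℤ) - 1)
  rw [hMt] at i1 i2
  rw [i1, i2]
  ring
lemma exists_pos_neg {s : Finset ℕ} {c : ℕ → ℤ} (hsum : ∑ b ∈ s, c b = 0)
    {j0 : ℕ} (hj0 : j0 ∈ s) (hne : c j0 ≠ 0) :
    (∃ jp ∈ s, 0 < c jp) ∧ ∃ jn ∈ s, c jn < 0 := by
  constructor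
  · by_contra hno
    push_neg at hno
    have h1 : ∑ b ∈ s, c b < ∑ b ∈ s, (0:ℤ) :=
      Finset.sum_lt_sum hno ⟨j0, hj0, lt_of_le_of_ne (hno j0 hj0) hne⟩
    simp only [Finset.sum_const_zero, hsum] at h1
    exact absurd h1 (lt_irrefl 0)
  · by_contra hno
    push_neg at hno
    have h1 : ∑ b ∈ s, (0:ℤ) < ∑ b ∈ s, c b :=
      Finset.sum_lt_sum hno ⟨j0, hj0, lt_of_le_of_ne' (hno j0 hj0) hne⟩
    simp only [Finset.sum_const_zero, hsum] at h1
    exact absurd h1 (lt_irrefl 0)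

lemma charges_zero_of_corePart (M : ℕ) (hM : 0 < M) (Y : YoungDiagram)
    (h : corePart M Y 0 = 0) : ∀ j < M, charge (runner M Y j) = 0 := by
  classical
  have hM' : (0:ℤ) < M := by exact_mod_cast hM
  by_contra hcon
  push_neg at hcon
  obtain ⟨j0, hj0M, hj0⟩ := hcon
  set c : ℕ → ℤ := fun j => charge (runner M Y j) with hcdef
  have hsum : ∑ b ∈ Finset.range M, c b = 0 := sum_charge M hM Y
  obtain ⟨⟨jp, hjpmem, hjp⟩, ⟨jn, hjnmem, hjn⟩⟩ :=
    exists_pos_neg hsum (Finset.mem_range.2 hj0M) hj0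
  have hjpM : (jp:ℤ) < M := by exact_mod_cast Finset.mem_range.1 hjpmem
  have hjnM : (jn:ℤ) < M := by exact_mod_cast Finset.mem_range.1 hjnmem
  -- bounds
  have hne : ((Finset.range M).image c).Nonempty :=
    Finset.Nonempty.image ⟨0, Finset.mem_range.2 hM⟩ c
  set B : ℤ := ((Finset.range M).image c).max' hne with hBdef
  set Bm : ℤ := ((Finset.range M).image c).min' hne with hBmdef
  have hB : ∀ j ∈ Finset.range M, c j ≤ B :=
    fun j hj => Finset.le_max' _ _ (Finset.mem_image_of_mem c hj)
  have hBm : ∀ j ∈ Finset.range M, Bm ≤ c j :=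
    fun j hj => Finset.min'_le _ _ (Finset.mem_image_of_mem c hj)
  have hmodmem : ∀ z : ℤ, ((z % (M:ℤ)).toNat) ∈ Finset.range M := by
    intro z
    have hm0 : 0 ≤ z % (M:ℤ) := Int.emod_nonneg z hM'.ne'
    have hmM : z % (M:ℤ) < M := Int.emod_lt_of_pos z hM'
    exact Finset.mem_range.2 (by omega)
  have hup : ∀ u ∈ coreMaya M Y, u < M * B := by
    intro u hu
    have h1 : Int.ediv u M < c ((u % (M:ℤ)).toNat) := hu
    rw [show Int.ediv u M = u / (M:ℤ) from rfl] at h1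
    have h2 : c ((u % (M:ℤ)).toNat) ≤ B := hB _ (hmodmem u)
    have h3 : M * (u / M) + u % M = u := Int.mul_ediv_add_emod u M
    have h4 : u % (M:ℤ) < M := Int.emod_lt_of_pos u hM'
    have h5 : (M:ℤ) * (u / M) ≤ M * (B - 1) :=
      mul_le_mul_of_nonneg_left (by omega) hM'.le
    have h6 : (M:ℤ) * B = M * (B - 1) + M := by ring
    omega
  have hdown : ∀ t : ℤ, t ∉ coreMaya M Y → Bm * M ≤ t := by
    intro t ht
    by_contra hc2
    push_neg at hc2
    have h1 : t / (M:ℤ) < Bm := (Int.ediv_lt_iff_lt_mul hM').2 hc2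
    exact ht (lt_of_lt_of_le h1 (hBm _ (hmodmem t)))
  -- the witness points
  set t0 : ℤ := M * c jn + jn with ht0def
  set u0 : ℤ := M * (c jp - 1) + jp with hu0def
  have hjnn : (0:ℤ) ≤ jn := Int.natCast_nonneg jn
  have hjpn : (0:ℤ) ≤ jp := Int.natCast_nonneg jp
  have ht0d : t0 / (M:ℤ) = c jn ∧ t0 % (M:ℤ) = jn := ediv_mul_add hM' hjnn hjnM
  have hu0d : u0 / (M:ℤ) = c jp - 1 ∧ u0 % (M:ℤ) = jp := ediv_mul_add hM' hjpn hjpM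
  have ht0not : t0 ∉ coreMaya M Y := by
    intro hmem
    have h1 : Int.ediv t0 M < c ((t0 % (M:ℤ)).toNat) := hmem
    rw [show Int.ediv t0 M = t0 / (M:ℤ) from rfl, ht0d.1, ht0d.2, Int.toNat_natCast] at h1
    exact absurd h1 (lt_irrefl _)
  have hu0mem : u0 ∈ coreMaya M Y := by
    show Int.ediv u0 M < c ((u0 % (M:ℤ)).toNat)
    rw [show Int.ediv u0 M = u0 / (M:ℤ) from rfl, hu0d.1, hu0d.2, Int.toNat_natCast]
    omega
  have ht0u0 : t0 < u0 := by
    have h1 : (M:ℤ) * c jn ≤ M * (-1) := mul_le_mul_of_nonneg_left (by omega) hM'.le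
    have h2 : (0:ℤ) ≤ M * (c jp - 1) := mul_nonneg hM'.le (by omega)
    have h3 : (M:ℤ) * (-1) = -M := by ring
    omega
  -- countAbove positivity
  have hfin1 : {u : ℤ | u ∈ coreMaya M Y ∧ t0 < u}.Finite :=
    Set.Finite.subset (Set.finite_Ioo t0 (M * B)) (fun u hu => ⟨hu.2, hup u hu.1⟩)
  have hca : 1 ≤ countAbove (coreMaya M Y) t0 := by
    have : 0 < countAbove (coreMaya M Y) t0 :=
      (Set.ncard_pos hfin1).2 ⟨u0, hu0mem, ht0u0⟩
    omega
  have hfin2 : {t : ℤ | t ∉ coreMaya M Y ∧ 0 + 1 ≤ countAbove (coreMaya M Y) t}.Finite := by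
    apply Set.Finite.subset (Set.finite_Ico (Bm * M) (M * B))
    rintro t ⟨htn, htc⟩
    refine ⟨hdown t htn, ?_⟩
    obtain ⟨u, hu1, hu2⟩ := Set.nonempty_of_ncard_ne_zero (s := {u : ℤ | u ∈ coreMaya M Y ∧ t < u}) (by
      show countAbove (coreMaya M Y) t ≠ 0
      omega)
    exact lt_trans hu2 (hup u hu1)
  have : 0 < corePart M Y 0 := by
    unfold corePart mayaPart
    exact (Set.ncard_pos hfin2).2 ⟨t0, ht0not, hca⟩
  omega

lemma corePart_of_charges_zero (M : ℕ) (hM : 0 < M) (Y : YoungDiagram)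
    (h : ∀ j < M, charge (runner M Y j) = 0) : ∀ i, corePart M Y i = 0 := by
  have hM' : (0:ℤ) < M := by exact_mod_cast hM
  have hC : coreMaya M Y = {z : ℤ | z < 0} := by
    ext z
    simp only [coreMaya, Set.mem_setOf_eq]
    have hm0 : 0 ≤ z % (M:ℤ) := Int.emod_nonneg z hM'.ne'
    have hmM : z % (M:ℤ) < M := Int.emod_lt_of_pos z hM'
    have hlt : ((Int.emod z M).toNat) < M := by
      show ((z % (M:ℤ)).toNat) < M
      omega
    rw [h _ hlt]
    show Int.ediv z M < 0 ↔ z < 0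
    constructor
    · intro hz
      by_contra hz0
      push_neg at hz0
      exact absurd (Int.ediv_nonneg hz0 hM'.le) (not_le.2 hz)
    · intro hz
      exact Int.ediv_neg_of_neg_of_pos hz hM'
  intro i
  unfold corePart mayaPart
  convert Set.ncard_empty ℤ using 2
  ext t
  simp only [Set.mem_setOf_eq, Set.mem_empty_iff_false, iff_false, not_and, not_le]
  intro ht
  rw [hC] at ht
  simp only [Set.mem_setOf_eq, not_lt] at ht
  have hzero : countAbove (coreMaya M Y) t = 0 := by
    unfold countAbove
    rw [hC]
    convert Set.ncard_empty ℤ using 2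
    ext u
    simp only [Set.mem_setOf_eq, Set.mem_empty_iff_false, iff_false, not_and, not_lt]
    omega
  omega
/-- a partition (Young diagram) `Y` has equal numbers of boxes in each
content residue class mod `M` (the content of the cell `(i,j)` being `j - i`) if and
only if its `M`-core is the empty partition. -/
theorem balanced_contents_iff_empty_core (M : ℕ) (hM : 0 < M) (Y : YoungDiagram) :
    (∀ r s : ZMod M,
        (Y.cells.filter fun c => ((c.2 : ZMod M) - (c.1 : ZMod M)) = r).card
          = (Y.cells.filter fun c => ((c.2 : ZMod M) - (c.1 : ZMod M)) = s).card)
      ↔ ∀ i, corePart M Y i = 0 := by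
  haveI : NeZero M := ⟨hM.ne'⟩
  have hM' : (0:ℤ) < M := by exact_mod_cast hM
  constructor
  · intro hbal
    apply corePart_of_charges_zero M hM Y
    intro j hj
    have hk := key_identity M hM Y (j:ℤ)
    have hmod : (((j:ℤ) % (M:ℤ)).toNat) = j := by
      rw [Int.emod_eq_of_lt (Int.natCast_nonneg j) (by exact_mod_cast hj), Int.toNat_natCast]
    rw [hmod] at hk
    have hb := hbal (((j:ℤ) : ZMod M)) ((((j:ℤ) + 1 : ℤ) : ZMod M))
    omega
  · intro hcore
    have hch := charges_zero_of_corePart M hM Y (hcore 0)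
    have hstep : ∀ a : ℤ,
        (Y.cells.filter fun c => ((c.2 : ZMod M) - (c.1 : ZMod M)) = (a : ZMod M)).card
          = (Y.cells.filter fun c => ((c.2 : ZMod M) - (c.1 : ZMod M)) = ((a + 1 : ℤ) : ZMod M)).card := by
      intro a
      have hk := key_identity M hM Y a
      have hm0 : 0 ≤ a % (M:ℤ) := Int.emod_nonneg a hM'.ne'
      have hmM : a % (M:ℤ) < M := Int.emod_lt_of_pos a hM'
      rw [hch ((a % (M:ℤ)).toNat) (by omega)] at hk
      omega
    have hnat : ∀ k : ℕ,
        (Y.cells.filter fun c => ((c.2 : ZMod M) - (c.1 : ZMod M)) = (((k:ℤ)) : ZMod M)).card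
          = (Y.cells.filter fun c => ((c.2 : ZMod M) - (c.1 : ZMod M)) = (((0:ℤ)) : ZMod M)).card := by
      intro k
      induction k with
      | zero => rfl
      | succ k ih =>
        have hs := hstep (k:ℤ)
        rw [show ((k:ℤ) + 1 : ℤ) = (((k+1:ℕ):ℤ)) by push_cast; ring] at hs
        omega
    intro r s
    have hr : (((r.val:ℕ):ℤ) : ZMod M) = r := by
      push_cast
      exact ZMod.natCast_rightInverse r
    have hs' : (((s.val:ℕ):ℤ) : ZMod M) = s := by
      push_cast
      exact ZMod.natCast_rightInverse s
    have h1 := hnat r.val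
    have h2 := hnat s.val
    rw [hr] at h1
    rw [hs'] at h2
    omega
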